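/- Let G = G_{m,n} = S_m □ P_n with m even, m ≥ 4, and n even. Then rn(G) ≤ (m n²)/2 + n − 1. -/

import Mathlib

/-- The star graph on `m` vertices with center `0`. -/
def starGraph (m : ℕ) : SimpleGraph (Fin m) :=
  SimpleGraph.fromRel (fun a _ => (a : ℕ) = 0)

/-- The path graph on `n` vertices `0, 1, …, n-1`. -/
def pathGraph' (n : ℕ) : SimpleGraph (Fin n) :=
  SimpleGraph.fromRel (fun a b => (a : ℕ) + 1 = b)

/-- The stacked-book graph `G_{m,n} = S_m □ P_n`. -/
def bookGraph (m n : ℕ) : SimpleGraph (Fin m × Fin n) :=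
  (starGraph m).boxProd (pathGraph' n)

/-- `f` is a radio labeling of `G` for diameter `D`:
`|f u - f v| ≥ D + 1 - d(u,v)` for all distinct `u, v`. -/
def IsRadioLabeling {V : Type*} (G : SimpleGraph V) (D : ℕ) (f : V → ℕ) : Prop :=
  ∀ u v : V, u ≠ v → (D : ℤ) + 1 - G.dist u v ≤ |(f u : ℤ) - (f v : ℤ)|

/-- The span of a labeling: maximum label minus minimum label. -/
noncomputable def span {V : Type*} (f : V → ℕ) : ℕ :=
  sSup (Set.range f) - sInf (Set.range f)

/-- The radio number of the stacked-book graph `G_{m,n}` (whose diameter is `n+1`). -/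
noncomputable def rnBook (m n : ℕ) : ℕ :=
  sInf {s | ∃ f : Fin m × Fin n → ℕ, IsRadioLabeling (bookGraph m n) (n + 1) f ∧ span f = s}

namespace RnBk

/-- which superblock a column belongs to -/
def colf (h j : ℕ) : ℕ := if j < h then j else j - h

/-- position within superblock -/
def kf (m h i j : ℕ) : ℕ :=
  if i = 0 then (if h ≤ j then 0 else 2*m - 1)
  else if j < h then (if i % 2 = 1 then i else i + m - 1)
  else (if i % 2 = 0 then i else i + m - 1)

/-- extra offset -/
def ef (m k : ℕ) : ℕ := if k = 0 then 0 else if k = 2*m - 1 then 2 else 1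

/-- the labeling, as a function of page i and column j -/
def fl (m h i j : ℕ) : ℕ :=
  h * (2*m*(colf h j) + kf m h i j) + 3*(colf h j) + ef m (kf m h i j)

lemma vert_spec (m h i j : ℕ) (hm : 4 ≤ m) (hm2 : m % 2 = 0) (hh : 1 ≤ h)
    (hi : i < m) (hj : j < 2*h) :
    colf h j < h ∧
    ( (i = 0 ∧ kf m h i j = 0 ∧ j = colf h j + h) ∨
      (i = 0 ∧ kf m h i j = 2*m-1 ∧ j = colf h j) ∨
      (i ≠ 0 ∧ 1 ≤ kf m h i j ∧ kf m h i j ≤ 2*m-2 ∧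
        (kf m h i j = i ∨ kf m h i j = i + m - 1) ∧
        ((kf m h i j % 2 = 1 ∧ j = colf h j) ∨ (kf m h i j % 2 = 0 ∧ j = colf h j + h)))) := by
  unfold kf colf
  split_ifs <;> omega

lemma ef_spec (m k : ℕ) (hm : 4 ≤ m) (hk : k ≤ 2*m-1) :
    (k = 0 ∧ ef m k = 0) ∨ (1 ≤ k ∧ k ≤ 2*m-2 ∧ ef m k = 1) ∨ (k = 2*m-1 ∧ ef m k = 2) := by
  unfold ef; split_ifs <;> omega

lemma kf_le (m h i j : ℕ) (hm : 4 ≤ m) (hi : i < m) : kf m h i j ≤ 2*m-1 := by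
  unfold kf; split_ifs <;> omega

lemma star_connected (m : ℕ) (hm : 0 < m) : (starGraph m).Connected := by
  rw [SimpleGraph.connected_iff]
  refine ⟨?_, ⟨⟨0, hm⟩⟩⟩
  have key : ∀ x : Fin m, (starGraph m).Reachable x ⟨0, hm⟩ := by
    intro x
    by_cases hx : x = ⟨0, hm⟩
    · rw [hx]
    · refine SimpleGraph.Adj.reachable ?_
      exact ⟨hx, Or.inr rfl⟩
  intro a b
  exact (key a).trans (key b).symm

lemma path_connected (n : ℕ) (hn : 0 < n) : (pathGraph' n).Connected := by
  rw [SimpleGraph.connected_iff]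
  refine ⟨?_, ⟨⟨0, hn⟩⟩⟩
  have key : ∀ (v : ℕ) (hv : v < n), (pathGraph' n).Reachable ⟨v, hv⟩ ⟨0, hn⟩ := by
    intro v
    induction v with
    | zero => intro hv; exact SimpleGraph.Reachable.refl _
    | succ w ih =>
      intro hv
      have hw : w < n := by omega
      have hadj : (pathGraph' n).Adj ⟨w, hw⟩ ⟨w+1, hv⟩ := by
        refine ⟨?_, Or.inl rfl⟩
        simp [Fin.ext_iff]
      exact hadj.symm.reachable.trans (ih hw)
  intro a b
  have ha := key a.1 a.2
  have hb := key b.1 b.2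
  simp only [Fin.eta] at ha hb
  exact ha.trans hb.symm

lemma book_connected (m n : ℕ) (hm : 0 < m) (hn : 0 < n) : (bookGraph m n).Connected := by
  rw [bookGraph, SimpleGraph.connected_boxProd]
  exact ⟨star_connected m hm, path_connected n hn⟩

lemma book_adj {m n : ℕ} {u v : Fin m × Fin n} (h : (bookGraph m n).Adj u v) :
    ((u.2 : ℕ) = (v.2 : ℕ) ∧ (u.1 : ℕ) ≠ (v.1 : ℕ) ∧ ((u.1 : ℕ) = 0 ∨ (v.1 : ℕ) = 0)) ∨
    ((u.1 : ℕ) = (v.1 : ℕ) ∧ ((u.2 : ℕ) + 1 = (v.2 : ℕ) ∨ (v.2 : ℕ) + 1 = (u.2 : ℕ))) := by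
  rw [bookGraph, SimpleGraph.boxProd_adj] at h
  rcases h with ⟨hs, hc⟩ | ⟨hp, hc⟩
  · left
    obtain ⟨hne, hor⟩ : u.1 ≠ v.1 ∧ ((u.1 : ℕ) = 0 ∨ (v.1 : ℕ) = 0) := hs
    exact ⟨congrArg Fin.val hc, fun he => hne (Fin.ext he), hor⟩
  · right
    obtain ⟨hne, hor⟩ : u.2 ≠ v.2 ∧ ((u.2 : ℕ) + 1 = (v.2 : ℕ) ∨ (v.2 : ℕ) + 1 = (u.2 : ℕ)) := hp
    exact ⟨congrArg Fin.val hc, hor⟩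

lemma walk_lb {V : Type*} {G : SimpleGraph V} (φ : V → ℤ)
    (hφ : ∀ a b : V, G.Adj a b → |φ a - φ b| ≤ 1) :
    ∀ {u v : V} (p : G.Walk u v), |φ u - φ v| ≤ (p.length : ℤ) := by
  intro u v p
  induction p with
  | nil => simp
  | @cons a b c hadj q ih =>
    rw [SimpleGraph.Walk.length_cons]
    have h1 := hφ a b hadj
    have h2 := abs_sub_le (φ a) (φ b) (φ c)
    push_cast
    linarith

lemma dist_lb {V : Type*} {G : SimpleGraph V} (φ : V → ℤ)
    (hφ : ∀ a b : V, G.Adj a b → |φ a - φ b| ≤ 1) {u v : V} (h : G.Reachable u v) :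
    |φ u - φ v| ≤ (G.dist u v : ℤ) := by
  obtain ⟨p, hp⟩ := h.exists_walk_length_eq_dist
  calc |φ u - φ v| ≤ (p.length : ℤ) := walk_lb φ hφ p
  _ = _ := by rw [hp]

section
variable {m n : ℕ}

lemma dist_col (hconn : (bookGraph m n).Connected) (u v : Fin m × Fin n) :
    ((u.2 : ℕ) : ℤ) - ((v.2 : ℕ) : ℤ) ≤ ((bookGraph m n).dist u v : ℤ) := by
  have hlip : ∀ a b : Fin m × Fin n, (bookGraph m n).Adj a b →
      |(((a.2 : ℕ) : ℤ)) - (((b.2 : ℕ) : ℤ))| ≤ 1 := by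
    intro a b hab
    rcases book_adj hab with ⟨h1, _, _⟩ | ⟨_, h2⟩ <;> rw [abs_le] <;> constructor <;> omega
  have hd := dist_lb (fun x => ((x.2 : ℕ) : ℤ)) hlip (hconn.preconnected u v)
  have := le_abs_self (((u.2 : ℕ) : ℤ) - ((v.2 : ℕ) : ℤ))
  linarith

lemma dist_center (hconn : (bookGraph m n).Connected) (u v : Fin m × Fin n)
    (hu : (u.1 : ℕ) = 0) (hv : (v.1 : ℕ) ≠ 0) :
    ((u.2 : ℕ) : ℤ) - ((v.2 : ℕ) : ℤ) + 1 ≤ ((bookGraph m n).dist u v : ℤ) ∧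
    ((v.2 : ℕ) : ℤ) - ((u.2 : ℕ) : ℤ) + 1 ≤ ((bookGraph m n).dist u v : ℤ) := by
  constructor
  · set φ : Fin m × Fin n → ℤ := fun x => ((x.2 : ℕ) : ℤ) + (if (x.1 : ℕ) = 0 then 1 else 0) with hφdef
    have hlip : ∀ a b : Fin m × Fin n, (bookGraph m n).Adj a b → |φ a - φ b| ≤ 1 := by
      intro a b hab
      simp only [hφdef]
      rcases book_adj hab with ⟨h1, h2, h3⟩ | ⟨h1, h2⟩ <;> rw [abs_le] <;> constructor <;>
        split_ifs <;> omega
    have hd := dist_lb φ hlip (hconn.preconnected u v)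
    have heq : φ u - φ v = ((u.2 : ℕ) : ℤ) - ((v.2 : ℕ) : ℤ) + 1 := by
      simp only [hφdef, if_pos hu, if_neg hv]; ring
    have := le_abs_self (φ u - φ v)
    linarith [heq ▸ this]
  · set φ : Fin m × Fin n → ℤ := fun x => ((x.2 : ℕ) : ℤ) - (if (x.1 : ℕ) = 0 then 1 else 0) with hφdef
    have hlip : ∀ a b : Fin m × Fin n, (bookGraph m n).Adj a b → |φ a - φ b| ≤ 1 := by
      intro a b hab
      simp only [hφdef]
      rcases book_adj hab with ⟨h1, h2, h3⟩ | ⟨h1, h2⟩ <;> rw [abs_le] <;> constructor <;>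
        split_ifs <;> omega
    have hd := dist_lb φ hlip (hconn.preconnected u v)
    have heq : φ v - φ u = ((v.2 : ℕ) : ℤ) - ((u.2 : ℕ) : ℤ) + 1 := by
      simp only [hφdef, if_pos hu, if_neg hv]; ring
    have h1 := neg_abs_le (φ u - φ v)
    have : φ v - φ u ≤ |φ u - φ v| := by
      have := neg_le_abs (φ u - φ v); linarith [neg_sub (φ u) (φ v)]
    linarith [heq ▸ this]

lemma dist_two (hconn : (bookGraph m n).Connected) (u v : Fin m × Fin n)
    (hu : (u.1 : ℕ) ≠ 0) (hv : (v.1 : ℕ) ≠ 0) (huv : (u.1 : ℕ) ≠ (v.1 : ℕ)) :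
    ((u.2 : ℕ) : ℤ) - ((v.2 : ℕ) : ℤ) + 2 ≤ ((bookGraph m n).dist u v : ℤ) := by
  set φ : Fin m × Fin n → ℤ := fun x =>
    ((x.2 : ℕ) : ℤ) + (if (x.1 : ℕ) = (u.1 : ℕ) then 1 else 0)
      - (if (x.1 : ℕ) = (v.1 : ℕ) then 1 else 0) with hφdef
  have hlip : ∀ a b : Fin m × Fin n, (bookGraph m n).Adj a b → |φ a - φ b| ≤ 1 := by
    intro a b hab
    simp only [hφdef]
    rcases book_adj hab with ⟨h1, h2, h3⟩ | ⟨h1, h2⟩ <;> rw [abs_le] <;> constructor <;>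
      split_ifs <;> omega
  have hd := dist_lb φ hlip (hconn.preconnected u v)
  have heq : φ u - φ v = ((u.2 : ℕ) : ℤ) - ((v.2 : ℕ) : ℤ) + 2 := by
    simp only [hφdef, if_true]
    rw [if_neg huv, if_neg (Ne.symm huv)]
    ring
  have := le_abs_self (φ u - φ v)
  linarith [heq ▸ this]


end

lemma fl_gap (m h : ℕ) (hm : 4 ≤ m) (hh : 1 ≤ h) (i1 j1 i2 j2 : ℕ)
    (hk1 : kf m h i1 j1 ≤ 2*m-1) (hk2 : kf m h i2 j2 ≤ 2*m-1)
    (hc : colf h j1 ≤ colf h j2)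
    (h3 : 2*m*(colf h j1) + kf m h i1 j1 + 3 ≤ 2*m*(colf h j2) + kf m h i2 j2) :
    2*(h:ℤ) + 1 ≤ (fl m h i2 j2 : ℤ) - (fl m h i1 j1 : ℤ) := by
  have e1 := ef_spec m (kf m h i1 j1) hm hk1
  have e2 := ef_spec m (kf m h i2 j2) hm hk2
  have hexp : (fl m h i2 j2 : ℤ) - (fl m h i1 j1 : ℤ)
      = (h:ℤ) * (((2*m*(colf h j2) + kf m h i2 j2 : ℕ) : ℤ)
          - ((2*m*(colf h j1) + kf m h i1 j1 : ℕ) : ℤ))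
        + 3*((colf h j2 : ℕ):ℤ) - 3*((colf h j1 : ℕ):ℤ)
        + ((ef m (kf m h i2 j2) : ℕ):ℤ) - ((ef m (kf m h i1 j1) : ℕ):ℤ) := by
    unfold fl; push_cast; ring
  have hmul : (h:ℤ) * 3 ≤ (h:ℤ) * (((2*m*(colf h j2) + kf m h i2 j2 : ℕ) : ℤ)
      - ((2*m*(colf h j1) + kf m h i1 j1 : ℕ) : ℤ)) := by
    apply mul_le_mul_of_nonneg_left _ (by positivity)
    omega
  have hR : 3*((colf h j1 : ℕ):ℤ) + ((ef m (kf m h i1 j1) : ℕ):ℤ)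
      ≤ 3*((colf h j2 : ℕ):ℤ) + ((ef m (kf m h i2 j2) : ℕ):ℤ) := by
    rcases Nat.eq_or_lt_of_le hc with hcc | hcc
    · have heqP : 2*m*(colf h j1) = 2*m*(colf h j2) := by rw [hcc]
      omega
    · omega
  have hhz : (1:ℤ) ≤ (h:ℤ) := by exact_mod_cast hh
  linarith [hexp, hmul, hR]

lemma key (m n h : ℕ) (hm : 4 ≤ m) (hm2 : m % 2 = 0) (hn : n = 2*h) (hh : 1 ≤ h)
    (u v : Fin m × Fin n)
    (hlt : 2*m*(colf h (u.2:ℕ)) + kf m h (u.1:ℕ) (u.2:ℕ)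
         < 2*m*(colf h (v.2:ℕ)) + kf m h (v.1:ℕ) (v.2:ℕ)) :
    ((n:ℤ) + 2) - ((bookGraph m n).dist u v : ℤ)
      ≤ (fl m h (v.1:ℕ) (v.2:ℕ) : ℤ) - (fl m h (u.1:ℕ) (u.2:ℕ) : ℤ) := by
  have hm0 : 0 < m := by omega
  have hn0 : 0 < n := by omega
  have hconn := book_connected m n hm0 hn0
  have hju : (u.2:ℕ) < 2*h := by have := u.2.isLt; omega
  have hjv : (v.2:ℕ) < 2*h := by have := v.2.isLt; omega
  obtain ⟨hau, Hu⟩ := vert_spec m h (u.1:ℕ) (u.2:ℕ) hm hm2 hh u.1.isLt hju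
  obtain ⟨hav, Hv⟩ := vert_spec m h (v.1:ℕ) (v.2:ℕ) hm hm2 hh v.1.isLt hjv
  have hkuB : kf m h (u.1:ℕ) (u.2:ℕ) ≤ 2*m-1 := kf_le m h _ _ hm u.1.isLt
  have hkvB : kf m h (v.1:ℕ) (v.2:ℕ) ≤ 2*m-1 := kf_le m h _ _ hm v.1.isLt
  have hune : u ≠ v := by intro he; rw [he] at hlt; exact lt_irrefl _ hlt
  have hd1 : (1:ℤ) ≤ ((bookGraph m n).dist u v : ℤ) := by
    exact_mod_cast hconn.pos_dist_of_ne hune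
  by_cases hfar : 2*m*(colf h (u.2:ℕ)) + kf m h (u.1:ℕ) (u.2:ℕ) + 3
      ≤ 2*m*(colf h (v.2:ℕ)) + kf m h (v.1:ℕ) (v.2:ℕ)
  · -- FAR case
    have hcle : colf h (u.2:ℕ) ≤ colf h (v.2:ℕ) := by
      by_contra hcgt
      push_neg at hcgt
      have h1 := Nat.mul_le_mul_left (2*m) (show colf h (v.2:ℕ) + 1 ≤ colf h (u.2:ℕ) from hcgt)
      have h2 : 2*m*(colf h (v.2:ℕ) + 1) = 2*m*(colf h (v.2:ℕ)) + 2*m := by ring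
      omega
    have hgap := fl_gap m h hm hh (u.1:ℕ) (u.2:ℕ) (v.1:ℕ) (v.2:ℕ) hkuB hkvB hcle hfar
    have hnz : (n:ℤ) = 2*h := by exact_mod_cast hn
    linarith
  · -- NEAR case
    push_neg at hfar
    -- column relation
    have hcc : colf h (v.2:ℕ) = colf h (u.2:ℕ) ∨ colf h (v.2:ℕ) = colf h (u.2:ℕ) + 1 := by
      rcases Nat.lt_trichotomy (colf h (u.2:ℕ)) (colf h (v.2:ℕ)) with hc | hc | hc
      · rcases Nat.lt_or_ge (colf h (v.2:ℕ)) (colf h (u.2:ℕ) + 2) with hc2 | hc2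
        · right; omega
        · exfalso
          have h1 := Nat.mul_le_mul_left (2*m) hc2
          have h2 : 2*m*(colf h (u.2:ℕ) + 2) = 2*m*(colf h (u.2:ℕ)) + 4*m := by ring
          omega
      · left; omega
      · exfalso
        have h1 := Nat.mul_le_mul_left (2*m) (show colf h (v.2:ℕ) + 1 ≤ colf h (u.2:ℕ) from hc)
        have h2 : 2*m*(colf h (v.2:ℕ) + 1) = 2*m*(colf h (v.2:ℕ)) + 2*m := by ring
        omega
    rcases hcc with hcol | hcol
    · -- SAME superblock column
      have heqP : 2*m*(colf h (v.2:ℕ)) = 2*m*(colf h (u.2:ℕ)) := by rw [hcol]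
      have hcolz : ((colf h (v.2:ℕ) : ℕ) : ℤ) = ((colf h (u.2:ℕ) : ℕ) : ℤ) := by
        exact_mod_cast congrArg (Nat.cast : ℕ → ℤ) hcol
      have hkk : kf m h (v.1:ℕ) (v.2:ℕ) = kf m h (u.1:ℕ) (u.2:ℕ) + 1 ∨
                 kf m h (v.1:ℕ) (v.2:ℕ) = kf m h (u.1:ℕ) (u.2:ℕ) + 2 := by omega
      rcases hkk with hkk | hkk
      · -- consecutive
        rcases Hu with ⟨hiu0, hku0, hju0⟩ | ⟨hiu0, hku0, hju0⟩ | ⟨hiu0, hku1, hku2, hkui, hkup⟩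
        · -- u is center at high column (k = 0); v has k = 1, nonzero
          rcases Hv with ⟨hiv0, hkv0, hjv0⟩ | ⟨hiv0, hkv0, hjv0⟩ | ⟨hiv0, hkv1, hkv2, hkvi, hkvp⟩
          · omega
          · omega
          · -- v nonzero, kv = 1 odd, so jv = colf
            have hkv1' : kf m h (v.1:ℕ) (v.2:ℕ) = 1 := by omega
            have hjv1 : (v.2:ℕ) = colf h (v.2:ℕ) := by
              rcases hkvp with ⟨hp, hj⟩ | ⟨hp, hj⟩ <;> omega
            have heu : ef m (kf m h (u.1:ℕ) (u.2:ℕ)) = 0 := by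
              rw [hku0]; unfold ef; split_ifs <;> omega
            have hev : ef m (kf m h (v.1:ℕ) (v.2:ℕ)) = 1 := by
              unfold ef; split_ifs <;> omega
            have hF : (fl m h (v.1:ℕ) (v.2:ℕ) : ℤ) - fl m h (u.1:ℕ) (u.2:ℕ) = (h:ℤ) + 1 := by
              unfold fl; rw [heu, hev, hku0, hkv1', hcol]; push_cast; ring
            have hdist := (dist_center hconn u v hiu0 hiv0).1
            omega
        · -- u center with k = 2m-1: impossible since kv = 2m ≤ 2m-1
          omega
        · -- u nonzero
          rcases Hv with ⟨hiv0, hkv0, hjv0⟩ | ⟨hiv0, hkv0, hjv0⟩ | ⟨hiv0, hkv1, hkv2, hkvi, hkvp⟩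
          · omega
          · -- v center at low column: kv = 2m-1, ku = 2m-2 even, ju = colf + h
            have hju1 : (u.2:ℕ) = colf h (u.2:ℕ) + h := by
              rcases hkup with ⟨hp, hj⟩ | ⟨hp, hj⟩ <;> omega
            have heu : ef m (kf m h (u.1:ℕ) (u.2:ℕ)) = 1 := by
              unfold ef; split_ifs <;> omega
            have hev : ef m (kf m h (v.1:ℕ) (v.2:ℕ)) = 2 := by
              rw [hkv0]; unfold ef; split_ifs <;> omega
            have hku' : kf m h (u.1:ℕ) (u.2:ℕ) = 2*m-2 := by omega
            have hF : (fl m h (v.1:ℕ) (v.2:ℕ) : ℤ) - fl m h (u.1:ℕ) (u.2:ℕ) = (h:ℤ) + 1 := by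
              unfold fl; rw [heu, hev, hku', hkv0, hcol]
              have c1 : ((2*m-2 : ℕ) : ℤ) = 2*(m:ℤ) - 2 := by omega
              have c2 : ((2*m-1 : ℕ) : ℤ) = 2*(m:ℤ) - 1 := by omega
              push_cast [c1, c2]
              ring
            have hdist := (dist_center hconn v u hiv0 hiu0).2
            rw [SimpleGraph.dist_comm] at hdist
            omega
          · -- both nonzero, consecutive: gap h, need dist ≥ h + 2
            have hne' : (u.1:ℕ) ≠ (v.1:ℕ) := by omega
            have heu : ef m (kf m h (u.1:ℕ) (u.2:ℕ)) = 1 := by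
              unfold ef; split_ifs <;> omega
            have hev : ef m (kf m h (v.1:ℕ) (v.2:ℕ)) = 1 := by
              unfold ef; split_ifs <;> omega
            have hF : (fl m h (v.1:ℕ) (v.2:ℕ) : ℤ) - fl m h (u.1:ℕ) (u.2:ℕ) = (h:ℤ) := by
              unfold fl; rw [heu, hev, hkk, hcol]; push_cast; ring
            rcases hkup with ⟨hp1, hj1⟩ | ⟨hp1, hj1⟩ <;>
              rcases hkvp with ⟨hp2, hj2⟩ | ⟨hp2, hj2⟩
            · omega
            · -- u low, v high: dist v u ≥ (jv - ju) + 2 = h + 2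
              have hdist := dist_two hconn v u hiv0 hiu0 (Ne.symm hne')
              rw [SimpleGraph.dist_comm] at hdist
              omega
            · -- u high, v low
              have hdist := dist_two hconn u v hiu0 hiv0 hne'
              omega
            · omega
      · -- two apart in same superblock
        rcases Hu with ⟨hiu0, hku0, hju0⟩ | ⟨hiu0, hku0, hju0⟩ | ⟨hiu0, hku1, hku2, hkui, hkup⟩
        · -- u center k=0, v has k=2 nonzero: gap 2h+1
          rcases Hv with ⟨hiv0, hkv0, hjv0⟩ | ⟨hiv0, hkv0, hjv0⟩ | ⟨hiv0, hkv1, hkv2, hkvi, hkvp⟩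
          · omega
          · omega
          · have heu : ef m (kf m h (u.1:ℕ) (u.2:ℕ)) = 0 := by
              rw [hku0]; unfold ef; split_ifs <;> omega
            have hev : ef m (kf m h (v.1:ℕ) (v.2:ℕ)) = 1 := by
              unfold ef; split_ifs <;> omega
            have hF : (fl m h (v.1:ℕ) (v.2:ℕ) : ℤ) - fl m h (u.1:ℕ) (u.2:ℕ) = 2*(h:ℤ) + 1 := by
              unfold fl; rw [heu, hev, hkk, hku0, hcol]; push_cast; ring
            omega
        · omega
        · rcases Hv with ⟨hiv0, hkv0, hjv0⟩ | ⟨hiv0, hkv0, hjv0⟩ | ⟨hiv0, hkv1, hkv2, hkvi, hkvp⟩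
          · omega
          · -- v center k=2m-1, ku = 2m-3: gap 2h+1
            have heu : ef m (kf m h (u.1:ℕ) (u.2:ℕ)) = 1 := by
              unfold ef; split_ifs <;> omega
            have hev : ef m (kf m h (v.1:ℕ) (v.2:ℕ)) = 2 := by
              rw [hkv0]; unfold ef; split_ifs <;> omega
            have hku' : kf m h (u.1:ℕ) (u.2:ℕ) = 2*m-3 := by omega
            have hF : (fl m h (v.1:ℕ) (v.2:ℕ) : ℤ) - fl m h (u.1:ℕ) (u.2:ℕ) = 2*(h:ℤ) + 1 := by
              unfold fl; rw [heu, hev, hku', hkv0, hcol]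
              have c1 : ((2*m-3 : ℕ) : ℤ) = 2*(m:ℤ) - 3 := by omega
              have c2 : ((2*m-1 : ℕ) : ℤ) = 2*(m:ℤ) - 1 := by omega
              push_cast [c1, c2]
              ring
            omega
          · -- both nonzero two apart: same column, distinct pages: dist ≥ 2, gap 2h
            have hne' : (u.1:ℕ) ≠ (v.1:ℕ) := by omega
            have heu : ef m (kf m h (u.1:ℕ) (u.2:ℕ)) = 1 := by
              unfold ef; split_ifs <;> omega
            have hev : ef m (kf m h (v.1:ℕ) (v.2:ℕ)) = 1 := by
              unfold ef; split_ifs <;> omega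
            have hF : (fl m h (v.1:ℕ) (v.2:ℕ) : ℤ) - fl m h (u.1:ℕ) (u.2:ℕ) = 2*(h:ℤ) := by
              unfold fl; rw [heu, hev, hkk, hcol]; push_cast; ring
            have hjj : (u.2:ℕ) = (v.2:ℕ) := by
              rcases hkup with ⟨hp1, hj1⟩ | ⟨hp1, hj1⟩ <;>
                rcases hkvp with ⟨hp2, hj2⟩ | ⟨hp2, hj2⟩ <;> omega
            have hdist := dist_two hconn u v hiu0 hiv0 hne'
            omega
    · -- CROSS superblock: colf v = colf u + 1
      have heqP : 2*m*(colf h (v.2:ℕ)) = 2*m*(colf h (u.2:ℕ)) + 2*m := by rw [hcol]; ring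
      have hkk : (kf m h (u.1:ℕ) (u.2:ℕ) = 2*m-1 ∧ kf m h (v.1:ℕ) (v.2:ℕ) = 0) ∨
                 (kf m h (u.1:ℕ) (u.2:ℕ) = 2*m-1 ∧ kf m h (v.1:ℕ) (v.2:ℕ) = 1) ∨
                 (kf m h (u.1:ℕ) (u.2:ℕ) = 2*m-2 ∧ kf m h (v.1:ℕ) (v.2:ℕ) = 0) := by omega
      rcases hkk with ⟨hku', hkv'⟩ | ⟨hku', hkv'⟩ | ⟨hku', hkv'⟩
      · -- center-to-center: u = (0, a), v = (0, a+1+h); gap h+1, dist ≥ h+1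
        have hju1 : (u.2:ℕ) = colf h (u.2:ℕ) := by
          rcases Hu with ⟨hiu0, hku0, hju0⟩ | ⟨hiu0, hku0, hju0⟩ | ⟨hiu0, hku1, hku2, hkui, hkup⟩ <;> omega
        have hjv1 : (v.2:ℕ) = colf h (v.2:ℕ) + h := by
          rcases Hv with ⟨hiv0, hkv0, hjv0⟩ | ⟨hiv0, hkv0, hjv0⟩ | ⟨hiv0, hkv1, hkv2, hkvi, hkvp⟩ <;> omega
        have heu : ef m (kf m h (u.1:ℕ) (u.2:ℕ)) = 2 := by
          rw [hku']; unfold ef; split_ifs <;> omega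
        have hev : ef m (kf m h (v.1:ℕ) (v.2:ℕ)) = 0 := by
          rw [hkv']; unfold ef; split_ifs <;> omega
        have hF : (fl m h (v.1:ℕ) (v.2:ℕ) : ℤ) - fl m h (u.1:ℕ) (u.2:ℕ) = (h:ℤ) + 1 := by
          unfold fl; rw [heu, hev, hku', hkv', hcol]
          have c2 : ((2*m-1 : ℕ) : ℤ) = 2*(m:ℤ) - 1 := by omega
          push_cast [c2]
          ring
        have hdist := dist_col hconn v u
        rw [SimpleGraph.dist_comm] at hdist
        omega
      · -- gap 2h+2: trivial with dist ≥ 1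
        have heu : ef m (kf m h (u.1:ℕ) (u.2:ℕ)) = 2 := by
          rw [hku']; unfold ef; split_ifs <;> omega
        have hev : ef m (kf m h (v.1:ℕ) (v.2:ℕ)) = 1 := by
          unfold ef; split_ifs <;> omega
        have hF : (fl m h (v.1:ℕ) (v.2:ℕ) : ℤ) - fl m h (u.1:ℕ) (u.2:ℕ) = 2*(h:ℤ) + 2 := by
          unfold fl; rw [heu, hev, hku', hkv', hcol]
          have c2 : ((2*m-1 : ℕ) : ℤ) = 2*(m:ℤ) - 1 := by omega
          push_cast [c2]
          ring
        omega
      · -- gap 2h+2: trivial with dist ≥ 1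
        have heu : ef m (kf m h (u.1:ℕ) (u.2:ℕ)) = 1 := by
          rw [hku']; unfold ef; split_ifs <;> omega
        have hev : ef m (kf m h (v.1:ℕ) (v.2:ℕ)) = 0 := by
          rw [hkv']; unfold ef; split_ifs <;> omega
        have hF : (fl m h (v.1:ℕ) (v.2:ℕ) : ℤ) - fl m h (u.1:ℕ) (u.2:ℕ) = 2*(h:ℤ) + 2 := by
          unfold fl; rw [heu, hev, hku', hkv', hcol]
          have c2 : ((2*m-2 : ℕ) : ℤ) = 2*(m:ℤ) - 2 := by omega
          push_cast [c2]
          ring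
        omega

lemma tf_inj (m n h : ℕ) (hm : 4 ≤ m) (hm2 : m % 2 = 0) (hn : n = 2*h) (hh : 1 ≤ h)
    (u v : Fin m × Fin n)
    (heq : 2*m*(colf h (u.2:ℕ)) + kf m h (u.1:ℕ) (u.2:ℕ)
         = 2*m*(colf h (v.2:ℕ)) + kf m h (v.1:ℕ) (v.2:ℕ)) : u = v := by
  have hju : (u.2:ℕ) < 2*h := by have := u.2.isLt; omega
  have hjv : (v.2:ℕ) < 2*h := by have := v.2.isLt; omega
  obtain ⟨hau, Hu⟩ := vert_spec m h (u.1:ℕ) (u.2:ℕ) hm hm2 hh u.1.isLt hju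
  obtain ⟨hav, Hv⟩ := vert_spec m h (v.1:ℕ) (v.2:ℕ) hm hm2 hh v.1.isLt hjv
  have hkuB : kf m h (u.1:ℕ) (u.2:ℕ) ≤ 2*m-1 := kf_le m h _ _ hm u.1.isLt
  have hkvB : kf m h (v.1:ℕ) (v.2:ℕ) ≤ 2*m-1 := kf_le m h _ _ hm v.1.isLt
  have hcol : colf h (u.2:ℕ) = colf h (v.2:ℕ) := by
    rcases Nat.lt_trichotomy (colf h (u.2:ℕ)) (colf h (v.2:ℕ)) with hc | hc | hc
    · exfalso
      have h1 := Nat.mul_le_mul_left (2*m) (show colf h (u.2:ℕ) + 1 ≤ colf h (v.2:ℕ) from hc)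
      have h2 : 2*m*(colf h (u.2:ℕ) + 1) = 2*m*(colf h (u.2:ℕ)) + 2*m := by ring
      omega
    · exact hc
    · exfalso
      have h1 := Nat.mul_le_mul_left (2*m) (show colf h (v.2:ℕ) + 1 ≤ colf h (u.2:ℕ) from hc)
      have h2 : 2*m*(colf h (v.2:ℕ) + 1) = 2*m*(colf h (v.2:ℕ)) + 2*m := by ring
      omega
  have heqP : 2*m*(colf h (u.2:ℕ)) = 2*m*(colf h (v.2:ℕ)) := by rw [hcol]
  have hkk : kf m h (u.1:ℕ) (u.2:ℕ) = kf m h (v.1:ℕ) (v.2:ℕ) := by omega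
  have hij : (u.1:ℕ) = (v.1:ℕ) ∧ (u.2:ℕ) = (v.2:ℕ) := by
    rcases Hu with ⟨hiu0, hku0, hju0⟩ | ⟨hiu0, hku0, hju0⟩ | ⟨hiu0, hku1, hku2, hkui, hkup⟩ <;>
      rcases Hv with ⟨hiv0, hkv0, hjv0⟩ | ⟨hiv0, hkv0, hjv0⟩ | ⟨hiv0, hkv1, hkv2, hkvi, hkvp⟩ <;>
      exact ⟨by omega, by omega⟩
  obtain ⟨hu1, hu2⟩ := hij
  have e1 : u.1 = v.1 := Fin.ext hu1
  have e2 : u.2 = v.2 := Fin.ext hu2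
  exact Prod.ext e1 e2

end RnBk

theorem rnBook_upper_bound_m_even (m n : ℕ) (hm : 4 ≤ m) (hme : Even m)
    (hn : Even n) (hn2 : 2 ≤ n) :
    rnBook m n ≤ m * n ^ 2 / 2 + n - 1 := by
  obtain ⟨h, hn2h⟩ : ∃ h, n = 2*h := by
    obtain ⟨k, hk⟩ := hn; exact ⟨k, by omega⟩
  have hh : 1 ≤ h := by omega
  have hm2 : m % 2 = 0 := Nat.even_iff.mp hme
  have hm0 : 0 < m := by omega
  have hn0 : 0 < n := by omega
  set F : Fin m × Fin n → ℕ := fun x => RnBk.fl m h (x.1:ℕ) (x.2:ℕ) with hFdef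
  have hFu : ∀ x : Fin m × Fin n, F x = RnBk.fl m h (x.1:ℕ) (x.2:ℕ) := fun _ => rfl
  have hradio : IsRadioLabeling (bookGraph m n) (n+1) F := by
    intro u v huv
    rcases Nat.lt_trichotomy (2*m*(RnBk.colf h (u.2:ℕ)) + RnBk.kf m h (u.1:ℕ) (u.2:ℕ))
      (2*m*(RnBk.colf h (v.2:ℕ)) + RnBk.kf m h (v.1:ℕ) (v.2:ℕ)) with hc | hc | hc
    · have hk := RnBk.key m n h hm hm2 hn2h hh u v hc
      have habs := le_abs_self ((F v : ℤ) - (F u : ℤ))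
      rw [abs_sub_comm] at habs
      rw [hFu u, hFu v] at habs
      push_cast
      rw [hFu u, hFu v]
      have : ((n:ℤ) + 1) + 1 = (n:ℤ) + 2 := by ring
      omega
    · exact absurd (RnBk.tf_inj m n h hm hm2 hn2h hh u v hc) huv
    · have hk := RnBk.key m n h hm hm2 hn2h hh v u hc
      rw [SimpleGraph.dist_comm] at hk
      have habs := le_abs_self ((F u : ℤ) - (F v : ℤ))
      rw [hFu u, hFu v] at habs
      push_cast
      rw [hFu u, hFu v]
      omega
  have hub : ∀ x : Fin m × Fin n, F x ≤ 2*m*h*h + 2*h - 1 := by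
    intro x
    have hjx : (x.2:ℕ) < 2*h := by have := x.2.isLt; omega
    obtain ⟨hax, _⟩ := RnBk.vert_spec m h (x.1:ℕ) (x.2:ℕ) hm hm2 hh x.1.isLt hjx
    have hkx : RnBk.kf m h (x.1:ℕ) (x.2:ℕ) ≤ 2*m-1 := RnBk.kf_le m h _ _ hm x.1.isLt
    have hex : RnBk.ef m (RnBk.kf m h (x.1:ℕ) (x.2:ℕ)) ≤ 2 := by
      unfold RnBk.ef; split_ifs <;> omega
    rw [hFu x]
    unfold RnBk.fl
    have h1 : 2*m*(RnBk.colf h (x.2:ℕ)) + RnBk.kf m h (x.1:ℕ) (x.2:ℕ) + 1 ≤ 2*m*h := by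
      have h2 := Nat.mul_le_mul_left (2*m) (show RnBk.colf h (x.2:ℕ) + 1 ≤ h from hax)
      have h3 : 2*m*(RnBk.colf h (x.2:ℕ) + 1) = 2*m*(RnBk.colf h (x.2:ℕ)) + 2*m := by ring
      omega
    have h4 : h*(2*m*(RnBk.colf h (x.2:ℕ)) + RnBk.kf m h (x.1:ℕ) (x.2:ℕ) + 1) ≤ h*(2*m*h) :=
      Nat.mul_le_mul_left h h1
    have h5 : h*(2*m*(RnBk.colf h (x.2:ℕ)) + RnBk.kf m h (x.1:ℕ) (x.2:ℕ) + 1)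
        = h*(2*m*(RnBk.colf h (x.2:ℕ)) + RnBk.kf m h (x.1:ℕ) (x.2:ℕ)) + h := by ring
    have h6 : h*(2*m*h) = 2*m*h*h := by ring
    omega
  have hmin : F (⟨0, hm0⟩, ⟨h, by omega⟩) = 0 := by
    rw [hFu]
    show RnBk.fl m h 0 h = 0
    unfold RnBk.fl RnBk.colf RnBk.kf
    rw [if_pos rfl, if_pos (le_refl h), if_neg (show ¬ h < h by omega)]
    simp [RnBk.ef, Nat.sub_self]
  have hmax : F (⟨0, hm0⟩, ⟨h-1, by omega⟩) = 2*m*h*h + 2*h - 1 := by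
    rw [hFu]
    show RnBk.fl m h 0 (h-1) = 2*m*h*h + 2*h - 1
    unfold RnBk.fl RnBk.colf RnBk.kf
    rw [if_pos rfl, if_neg (show ¬ h ≤ h-1 by omega), if_pos (show h-1 < h by omega)]
    have hef : RnBk.ef m (2*m-1) = 2 := by unfold RnBk.ef; split_ifs <;> omega
    rw [hef]
    obtain ⟨h', rfl⟩ : ∃ h', h = h'+1 := ⟨h-1, by omega⟩
    obtain ⟨m', rfl⟩ : ∃ m', m = m'+1 := ⟨m-1, by omega⟩
    have c1 : (h'+1) - 1 = h' := by omega
    have c2 : 2*(m'+1) - 1 = 2*m'+1 := by omega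
    rw [c1, c2]
    have c3 : 2*(m'+1)*(h'+1)*(h'+1) + 2*(h'+1) - 1 = 2*(m'+1)*(h'+1)*(h'+1) + (2*h'+1) := by
      omega
    rw [c3]
    ring
  have hs1 : sInf (Set.range F) = 0 := Nat.sInf_eq_zero.mpr (Or.inl ⟨_, hmin⟩)
  have hs2 : sSup (Set.range F) = 2*m*h*h + 2*h - 1 := by
    apply le_antisymm
    · apply csSup_le ⟨F (⟨0, hm0⟩, ⟨h, by omega⟩), Set.mem_range_self _⟩
      rintro y ⟨x, rfl⟩
      exact hub x
    · refine le_csSup ⟨2*m*h*h + 2*h - 1, ?_⟩ ⟨_, hmax⟩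
      rintro y ⟨x, rfl⟩
      exact hub x
  have hspan : span F = 2*m*h*h + 2*h - 1 := by
    rw [span, hs1, hs2]
    omega
  have hmem : (2*m*h*h + 2*h - 1) ∈
      {s | ∃ f : Fin m × Fin n → ℕ, IsRadioLabeling (bookGraph m n) (n + 1) f ∧ span f = s} :=
    ⟨F, hradio, hspan⟩
  have hle := Nat.sInf_le hmem
  have heq : m * n ^ 2 / 2 + n - 1 = 2*m*h*h + 2*h - 1 := by
    have h1 : m * n ^ 2 = 2*(2*m*h*h) := by subst hn2h; ring
    rw [h1, Nat.mul_div_cancel_left _ (by norm_num : 0 < 2)]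
    omega
  rw [rnBook, heq]
  exact hle
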